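/- If B is an invertible matrix such that (B C₁ Bᵀ)(B C₂ Bᵀ) = I with B C₁ Bᵀ and B C₂ Bᵀ diagonal, then the geometric mean of C₁ and C₂ equals A Aᵀ where A = B^{-1}. -/

import Mathlib

open Matrix

/-- Spectral function of a real matrix: applies `f` to the eigenvalues when the
matrix is symmetric (Hermitian); junk value (the matrix itself) otherwise. -/
noncomputable def mfun {N : ℕ} (f : ℝ → ℝ) (A : Matrix (Fin N) (Fin N) ℝ) :
    Matrix (Fin N) (Fin N) ℝ :=
  if h : A.IsHermitian then
    (h.eigenvectorUnitary : Matrix (Fin N) (Fin N) ℝ) *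
      Matrix.diagonal (fun i => f (h.eigenvalues i)) *
      (star h.eigenvectorUnitary : Matrix (Fin N) (Fin N) ℝ)
  else A

/-- The (unique SPD) square root of an SPD matrix, defined spectrally. -/
noncomputable def sqrtm {N : ℕ} (A : Matrix (Fin N) (Fin N) ℝ) := mfun Real.sqrt A

/-- The logarithm of an SPD matrix, defined spectrally. -/
noncomputable def logm {N : ℕ} (A : Matrix (Fin N) (Fin N) ℝ) := mfun Real.log A

/-- The exponential of a symmetric matrix, defined spectrally. -/
noncomputable def expm {N : ℕ} (A : Matrix (Fin N) (Fin N) ℝ) := mfun Real.exp A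

/-- Real power of an SPD matrix, defined spectrally. -/
noncomputable def powm {N : ℕ} (A : Matrix (Fin N) (Fin N) ℝ) (b : ℝ) :=
  mfun (fun x => x ^ b) A

/-- The geometric mean `C₁ # C₂ = C₁^{1/2} (C₁^{-1/2} C₂ C₁^{-1/2})^{1/2} C₁^{1/2}`. -/
noncomputable def geomMean {N : ℕ} (C₁ C₂ : Matrix (Fin N) (Fin N) ℝ) :=
  sqrtm C₁ * sqrtm ((sqrtm C₁)⁻¹ * C₂ * (sqrtm C₁)⁻¹) * sqrtm C₁

/-- Frobenius norm of a real matrix. -/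
noncomputable def frobNorm {N : ℕ} (A : Matrix (Fin N) (Fin N) ℝ) : ℝ :=
  Real.sqrt (∑ i, ∑ j, (A i j) ^ 2)

/-- The Fisher information Riemannian distance
`δ_R(C₁, C₂) = ‖ln (C₁^{-1/2} C₂ C₁^{-1/2})‖_F`. -/
noncomputable def distR {N : ℕ} (C₁ C₂ : Matrix (Fin N) (Fin N) ℝ) : ℝ :=
  frobNorm (logm ((sqrtm C₁)⁻¹ * C₂ * (sqrtm C₁)⁻¹))

/-- The geodesic `γ_β(Ω → Φ) = Ω^{1/2} (Ω^{-1/2} Φ Ω^{-1/2})^β Ω^{1/2}`. -/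
noncomputable def geodesic {N : ℕ} (Ω Φ : Matrix (Fin N) (Fin N) ℝ) (b : ℝ) :=
  sqrtm Ω * powm ((sqrtm Ω)⁻¹ * Φ * (sqrtm Ω)⁻¹) b * sqrtm Ω

open scoped MatrixOrder in
noncomputable def Matrix.PosSemidef.sqrt {N : ℕ} {A : Matrix (Fin N) (Fin N) ℝ}
    (_hA : A.PosSemidef) : Matrix (Fin N) (Fin N) ℝ := CFC.sqrt A

open scoped MatrixOrder in
lemma Matrix.PosSemidef.posSemidef_sqrt {N : ℕ} {A : Matrix (Fin N) (Fin N) ℝ}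
    (hA : A.PosSemidef) : hA.sqrt.PosSemidef := (CFC.sqrt_nonneg A).posSemidef

open scoped MatrixOrder in
lemma Matrix.PosSemidef.sqrt_mul_self {N : ℕ} {A : Matrix (Fin N) (Fin N) ℝ}
    (hA : A.PosSemidef) : hA.sqrt * hA.sqrt = A := CFC.sqrt_mul_sqrt_self A hA.nonneg

open scoped MatrixOrder in
lemma Matrix.PosSemidef.eq_sqrt_of_sq_eq {N : ℕ} {X M : Matrix (Fin N) (Fin N) ℝ}
    (hX : X.PosSemidef) (hM : M.PosSemidef) (h : X ^ 2 = M) : X = hM.sqrt :=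
  ((CFC.sqrt_eq_iff M X hM.nonneg hX.nonneg).mpr (by rw [← sq]; exact h)).symm

open scoped MatrixOrder in
lemma sqrtm_eq {N : ℕ} {A : Matrix (Fin N) (Fin N) ℝ} (hA : A.PosSemidef) :
    sqrtm A = hA.sqrt := by
  rw [sqrtm, mfun, dif_pos hA.1, Matrix.PosSemidef.sqrt, CFC.sqrt_eq_real_sqrt A hA.nonneg,
    cfcₙ_eq_cfc, hA.1.cfc_eq]
  simp [IsHermitian.cfc, Unitary.conjStarAlgAut_apply, Function.comp_def]


/-- if `B` jointly diagonalizes `C₁, C₂` and `(B C₁ Bᵀ)(B C₂ Bᵀ) = I`,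
then `C₁ # C₂ = A Aᵀ` where `A = B⁻¹`. -/
theorem stmt9 {N : ℕ} (C₁ C₂ B : Matrix (Fin N) (Fin N) ℝ) (d₁ d₂ : Fin N → ℝ)
    (h₁ : C₁.PosDef) (h₂ : C₂.PosDef) (hB : IsUnit B)
    (hD₁ : B * C₁ * Bᵀ = Matrix.diagonal d₁) (hD₂ : B * C₂ * Bᵀ = Matrix.diagonal d₂)
    (hI : (B * C₁ * Bᵀ) * (B * C₂ * Bᵀ) = 1) :
    geomMean C₁ C₂ = B⁻¹ * (B⁻¹)ᵀ := by
  have hBd : IsUnit B.det := (Matrix.isUnit_iff_isUnit_det B).mp hB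
  have hBB : B * B⁻¹ = 1 := Matrix.mul_nonsing_inv B hBd
  have hBB' : B⁻¹ * B = 1 := Matrix.nonsing_inv_mul B hBd
  have hBt : (Bᵀ)⁻¹ = (B⁻¹)ᵀ := (Matrix.transpose_nonsing_inv B).symm
  have hBtB : (B⁻¹)ᵀ * Bᵀ = 1 := by
    rw [← Matrix.transpose_mul, hBB, Matrix.transpose_one]
  have hBtB' : Bᵀ * (B⁻¹)ᵀ = 1 := by
    rw [← Matrix.transpose_mul, hBB', Matrix.transpose_one]
  have hC₁ : C₁ = B⁻¹ * Matrix.diagonal d₁ * (B⁻¹)ᵀ := by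
    rw [← hD₁]
    symm
    calc B⁻¹ * (B * C₁ * Bᵀ) * (B⁻¹)ᵀ
        = (B⁻¹ * B) * C₁ * (Bᵀ * (B⁻¹)ᵀ) := by noncomm_ring
      _ = C₁ := by rw [hBB', hBtB']; simp
  have hC₂ : C₂ = B⁻¹ * Matrix.diagonal d₂ * (B⁻¹)ᵀ := by
    rw [← hD₂]
    symm
    calc B⁻¹ * (B * C₂ * Bᵀ) * (B⁻¹)ᵀ
        = (B⁻¹ * B) * C₂ * (Bᵀ * (B⁻¹)ᵀ) := by noncomm_ring
      _ = C₂ := by rw [hBB', hBtB']; simp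
  have hDD : Matrix.diagonal d₁ * Matrix.diagonal d₂ = 1 := by rw [← hD₁, ← hD₂]; exact hI
  have hD₁inv : (Matrix.diagonal d₁)⁻¹ = Matrix.diagonal d₂ := Matrix.inv_eq_right_inv hDD
  -- the square root S of C₁
  set S : Matrix (Fin N) (Fin N) ℝ := sqrtm C₁ with hSdef
  have hSeq : S = h₁.posSemidef.sqrt := sqrtm_eq h₁.posSemidef
  have hSpsd : S.PosSemidef := hSeq ▸ h₁.posSemidef.posSemidef_sqrt
  have hSS : S * S = C₁ := by rw [hSeq]; exact h₁.posSemidef.sqrt_mul_self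
  have hSdet : IsUnit S.det := by
    have : S.det * S.det = C₁.det := by rw [← Matrix.det_mul, hSS]
    have hpos : 0 < C₁.det := h₁.det_pos
    refine isUnit_iff_ne_zero.mpr fun h => ?_
    rw [h, zero_mul] at this
    exact hpos.ne' this.symm
  have hSinv : S * S⁻¹ = 1 := Matrix.mul_nonsing_inv S hSdet
  have hSinv' : S⁻¹ * S = 1 := Matrix.nonsing_inv_mul S hSdet
  have hSt : Sᵀ = S := by
    rw [← Matrix.conjTranspose_eq_transpose_of_trivial]
    exact hSpsd.1
  have hSit : (S⁻¹)ᵀ = S⁻¹ := by rw [Matrix.transpose_nonsing_inv, hSt]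
  have hC₁inv : C₁⁻¹ = Bᵀ * Matrix.diagonal d₂ * B := by
    rw [hC₁, Matrix.mul_inv_rev, Matrix.mul_inv_rev, ← hBt, Matrix.nonsing_inv_nonsing_inv B hBd,
      Matrix.nonsing_inv_nonsing_inv (Bᵀ) (by rwa [Matrix.det_transpose]), hD₁inv]
    noncomm_ring
  have hSinvSq : S⁻¹ * S⁻¹ = C₁⁻¹ := by rw [← Matrix.mul_inv_rev, hSS]
  -- the candidate square root X
  set X : Matrix (Fin N) (Fin N) ℝ := S⁻¹ * (B⁻¹ * (B⁻¹)ᵀ) * S⁻¹ with hXdef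
  have hXpsd : X.PosSemidef := by
    have : X = (S⁻¹ * B⁻¹) * (S⁻¹ * B⁻¹)ᴴ := by
      rw [Matrix.conjTranspose_eq_transpose_of_trivial, Matrix.transpose_mul, hSit, hXdef]
      noncomm_ring
    rw [this]
    exact Matrix.posSemidef_self_mul_conjTranspose _
  have hX2 : X ^ 2 = S⁻¹ * C₂ * S⁻¹ := by
    have key : (B⁻¹)ᵀ * C₁⁻¹ * B⁻¹ = Matrix.diagonal d₂ := by
      rw [hC₁inv]
      calc (B⁻¹)ᵀ * (Bᵀ * Matrix.diagonal d₂ * B) * B⁻¹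
          = ((B⁻¹)ᵀ * Bᵀ) * Matrix.diagonal d₂ * (B * B⁻¹) := by noncomm_ring
        _ = Matrix.diagonal d₂ := by rw [hBtB, hBB]; simp
    calc X ^ 2 = S⁻¹ * (B⁻¹ * (((B⁻¹)ᵀ * (S⁻¹ * S⁻¹) * B⁻¹) * (B⁻¹)ᵀ)) * S⁻¹ := by
          rw [hXdef]; noncomm_ring
      _ = S⁻¹ * C₂ * S⁻¹ := by
          rw [hSinvSq, key, hC₂]; noncomm_ring
  have hMpsd : (S⁻¹ * C₂ * S⁻¹).PosSemidef := hX2 ▸ hXpsd.pow 2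
  have hXsqrt : X = hMpsd.sqrt := hXpsd.eq_sqrt_of_sq_eq hMpsd hX2
  rw [geomMean, ← hSdef, sqrtm_eq hMpsd, ← hXsqrt, hXdef]
  calc S * (S⁻¹ * (B⁻¹ * (B⁻¹)ᵀ) * S⁻¹) * S
      = (S * S⁻¹) * (B⁻¹ * (B⁻¹)ᵀ) * (S⁻¹ * S) := by noncomm_ring
    _ = B⁻¹ * (B⁻¹)ᵀ := by rw [hSinv, hSinv']; simp
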